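/- arXiv:1208.0737 — 2 statements merged into one kernel-verified Lean document; each statement's English description precedes it below -/
import Mathlib

section
/- The map f: ℝ² → S³×S³, f(s,t) = (cos s + i sin s, cos t + i sin t), is an almost complex immersion: J f_s = (2/√3) f_t + (1/√3) f_s′ where explicitly J f_s = (1/√3)(sin s − i cos s, 2(sin t − i cos t)), so the tangent plane span{f_s, f_t} is invariant under J; moreover P f_s = f_t, and g(f_s,f_s) = g(f_t,f_t) = 4/3, g(f_s,f_t) = −2/3. -/
noncomputable section

/-- The almost complex structure `J` of the nearly Kähler `S³ × S³` at the point `(p, q)`. -/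
def NKJ (p q : Quaternion ℝ) (Z : Quaternion ℝ × Quaternion ℝ) :
    Quaternion ℝ × Quaternion ℝ :=
  ((Real.sqrt 3)⁻¹ • ((2 : ℝ) • (p * q⁻¹ * Z.2) - Z.1),
   (Real.sqrt 3)⁻¹ • (-((2 : ℝ) • (q * p⁻¹ * Z.1)) + Z.2))

/-- The almost product structure `P` at `(p, q)`: `P(U,V) = (pq⁻¹V, qp⁻¹U)`. -/
def NKP (p q : Quaternion ℝ) (Z : Quaternion ℝ × Quaternion ℝ) :
    Quaternion ℝ × Quaternion ℝ :=
  (p * q⁻¹ * Z.2, q * p⁻¹ * Z.1)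

/-- The nearly Kähler metric of `S³ × S³` at `(p, q)` (explicit formula). -/
def NKg (p q : Quaternion ℝ) (Z Z' : Quaternion ℝ × Quaternion ℝ) : ℝ :=
  (4 / 3 : ℝ) * ((inner ℝ Z.1 Z'.1 : ℝ) + (inner ℝ Z.2 Z'.2 : ℝ))
    - (2 / 3 : ℝ) * ((inner ℝ (p⁻¹ * Z.1) (q⁻¹ * Z'.2) : ℝ)
      + (inner ℝ (p⁻¹ * Z'.1) (q⁻¹ * Z.2) : ℝ))

/-- The flat totally geodesic example `f(s,t) = (cos s + i sin s, cos t + i sin t)`. -/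
def NKf (z : ℝ × ℝ) : Quaternion ℝ × Quaternion ℝ :=
  ((⟨Real.cos z.1, Real.sin z.1, 0, 0⟩ : Quaternion ℝ),
   (⟨Real.cos z.2, Real.sin z.2, 0, 0⟩ : Quaternion ℝ))

open Quaternion

private def mkq (a b : ℝ) : Quaternion ℝ := ⟨a, b, 0, 0⟩

@[simp] private lemma mkq_re (a b : ℝ) : (mkq a b).re = a := rfl
@[simp] private lemma mkq_imI (a b : ℝ) : (mkq a b).imI = b := rfl
@[simp] private lemma mkq_imJ (a b : ℝ) : (mkq a b).imJ = 0 := rfl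
@[simp] private lemma mkq_imK (a b : ℝ) : (mkq a b).imK = 0 := rfl

private lemma mkq_mul (a b c d : ℝ) :
    mkq a b * mkq c d = mkq (a * c - b * d) (a * d + b * c) := by
  ext <;> simp <;> ring

private lemma mkq_inj {a b c d : ℝ} (h1 : a = c) (h2 : b = d) : mkq a b = mkq c d := by
  rw [h1, h2]

private lemma mkq_inv (s : ℝ) :
    (mkq (Real.cos s) (Real.sin s))⁻¹ = mkq (Real.cos s) (-Real.sin s) := by
  apply inv_eq_of_mul_eq_one_right
  rw [mkq_mul]
  have h := Real.sin_sq_add_cos_sq s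
  ext <;> simp <;> nlinarith [h]

private lemma mkq_hasDerivAt (s : ℝ) :
    HasDerivAt (fun s : ℝ => mkq (Real.cos s) (Real.sin s))
      (mkq (-Real.sin s) (Real.cos s)) s := by
  have h1 : (fun s : ℝ => mkq (Real.cos s) (Real.sin s))
      = fun s => Real.cos s • (1 : Quaternion ℝ) + Real.sin s • mkq 0 1 := by
    funext s; ext <;> simp
  rw [h1]
  have := ((Real.hasDerivAt_cos s).smul_const (1 : Quaternion ℝ)).add
      ((Real.hasDerivAt_sin s).smul_const (mkq 0 1))
  refine HasDerivAt.congr_deriv this ?_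
  ext <;> simp

private def NKf' (z : ℝ × ℝ) : Quaternion ℝ × Quaternion ℝ :=
  (mkq (Real.cos z.1) (Real.sin z.1), mkq (Real.cos z.2) (Real.sin z.2))

private lemma NKf'_hasFDerivAt (z : ℝ × ℝ) :
    HasFDerivAt NKf'
      (((((1 : ℝ →L[ℝ] ℝ).smulRight (mkq (-Real.sin z.1) (Real.cos z.1))).comp
          (ContinuousLinearMap.fst ℝ ℝ ℝ)).prod
        (((1 : ℝ →L[ℝ] ℝ).smulRight (mkq (-Real.sin z.2) (Real.cos z.2))).comp
          (ContinuousLinearMap.snd ℝ ℝ ℝ)))) z := by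
  exact ((mkq_hasDerivAt z.1).hasFDerivAt.comp z hasFDerivAt_fst).prodMk
    ((mkq_hasDerivAt z.2).hasFDerivAt.comp z hasFDerivAt_snd)

private lemma fderiv_NKf' (z : ℝ × ℝ) (v : ℝ × ℝ) :
    fderiv ℝ NKf' z v = (v.1 • mkq (-Real.sin z.1) (Real.cos z.1),
      v.2 • mkq (-Real.sin z.2) (Real.cos z.2)) := by
  rw [(NKf'_hasFDerivAt z).fderiv]
  simp

private lemma inner_mkq (a b c d : ℝ) :
    (inner ℝ (mkq a b) (mkq c d) : ℝ) = a * c + b * d := by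
  have : star (mkq c d) = mkq c (-d) := by ext <;> simp
  rw [Quaternion.inner_def, this, mkq_mul]
  show a * c - b * -d = a * c + b * d
  ring

/-- `f(s,t) = (cos s + i sin s, cos t + i sin t)` is an almost complex
immersion: `J f_s = (1/√3)(sin s − i cos s, 2(sin t − i cos t))`, the tangent plane
`span{f_s, f_t}` is `J`-invariant, `P f_s = f_t`, and
`g(f_s,f_s) = g(f_t,f_t) = 4/3`, `g(f_s,f_t) = −2/3`. -/
theorem NK_example_flat (z : ℝ × ℝ)
    (fs ft : Quaternion ℝ × Quaternion ℝ)
    (hfs : fs = fderiv ℝ NKf z (1, 0)) (hft : ft = fderiv ℝ NKf z (0, 1)) :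
    NKJ (NKf z).1 (NKf z).2 fs
        = ((Real.sqrt 3)⁻¹ • (⟨Real.sin z.1, -Real.cos z.1, 0, 0⟩ : Quaternion ℝ),
           (Real.sqrt 3)⁻¹ • ((2 : ℝ) • (⟨Real.sin z.2, -Real.cos z.2, 0, 0⟩ : Quaternion ℝ))) ∧
    NKJ (NKf z).1 (NKf z).2 fs ∈ Submodule.span ℝ {fs, ft} ∧
    NKJ (NKf z).1 (NKf z).2 ft ∈ Submodule.span ℝ {fs, ft} ∧
    NKP (NKf z).1 (NKf z).2 fs = ft ∧
    NKg (NKf z).1 (NKf z).2 fs fs = 4 / 3 ∧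
    NKg (NKf z).1 (NKf z).2 ft ft = 4 / 3 ∧
    NKg (NKf z).1 (NKf z).2 fs ft = -(2 / 3) := by
  have hNK : NKf = NKf' := rfl
  have hs := Real.sin_sq_add_cos_sq z.1
  have ht := Real.sin_sq_add_cos_sq z.2
  have hfs' : fs = (mkq (-Real.sin z.1) (Real.cos z.1), 0) := by
    rw [hfs, hNK, fderiv_NKf']; simp
  have hft' : ft = (0, mkq (-Real.sin z.2) (Real.cos z.2)) := by
    rw [hft, hNK, fderiv_NKf']; simp
  have hp1 : (NKf z).1 = mkq (Real.cos z.1) (Real.sin z.1) := rfl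
  have hp2 : (NKf z).2 = mkq (Real.cos z.2) (Real.sin z.2) := rfl
  have hA : (NKf z).2 * ((NKf z).1)⁻¹ * mkq (-Real.sin z.1) (Real.cos z.1)
      = mkq (-Real.sin z.2) (Real.cos z.2) := by
    rw [hp1, hp2, mkq_inv, mkq_mul, mkq_mul]
    exact mkq_inj (by linear_combination (-Real.sin z.2) * hs)
      (by linear_combination (Real.cos z.2) * hs)
  have hB : (NKf z).1 * ((NKf z).2)⁻¹ * mkq (-Real.sin z.2) (Real.cos z.2)
      = mkq (-Real.sin z.1) (Real.cos z.1) := by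
    rw [hp1, hp2, mkq_inv, mkq_mul, mkq_mul]
    exact mkq_inj (by linear_combination (-Real.sin z.1) * ht)
      (by linear_combination (Real.cos z.1) * ht)
  have hC : ((NKf z).1)⁻¹ * mkq (-Real.sin z.1) (Real.cos z.1) = mkq 0 1 := by
    rw [hp1, mkq_inv, mkq_mul]
    exact mkq_inj (by ring) (by linear_combination hs)
  have hD : ((NKf z).2)⁻¹ * mkq (-Real.sin z.2) (Real.cos z.2) = mkq 0 1 := by
    rw [hp2, mkq_inv, mkq_mul]
    exact mkq_inj (by ring) (by linear_combination ht)
  have hJfs : NKJ (NKf z).1 (NKf z).2 fs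
      = (-(Real.sqrt 3)⁻¹) • fs + (-(2 * (Real.sqrt 3)⁻¹)) • ft := by
    rw [hfs', hft']
    simp only [NKJ, hA, mul_zero, smul_zero, zero_sub, add_zero, Prod.smul_mk,
      Prod.mk_add_mk]
    refine Prod.ext ?_ ?_ <;> ext <;> simp <;> ring
  have hJft : NKJ (NKf z).1 (NKf z).2 ft
      = (2 * (Real.sqrt 3)⁻¹) • fs + (Real.sqrt 3)⁻¹ • ft := by
    rw [hfs', hft']
    simp only [NKJ, hB, mul_zero, smul_zero, zero_add, Prod.smul_mk, Prod.mk_add_mk]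
    refine Prod.ext ?_ ?_ <;> ext <;> simp <;> ring
  have hmemfs : fs ∈ Submodule.span ℝ ({fs, ft} : Set (Quaternion ℝ × Quaternion ℝ)) :=
    Submodule.subset_span (Set.mem_insert _ _)
  have hmemft : ft ∈ Submodule.span ℝ ({fs, ft} : Set (Quaternion ℝ × Quaternion ℝ)) :=
    Submodule.subset_span (Set.mem_insert_of_mem _ rfl)
  refine ⟨?_, ?_, ?_, ?_, ?_, ?_, ?_⟩
  · rw [hfs']
    simp only [NKJ, hA, mul_zero, smul_zero, zero_sub, add_zero]
    refine Prod.ext ?_ ?_ <;> · congr 1; ext <;> simp <;> ring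
  · rw [hJfs]
    exact Submodule.add_mem _ (Submodule.smul_mem _ _ hmemfs) (Submodule.smul_mem _ _ hmemft)
  · rw [hJft]
    exact Submodule.add_mem _ (Submodule.smul_mem _ _ hmemfs) (Submodule.smul_mem _ _ hmemft)
  · rw [hfs', hft']
    simp only [NKP, hA, mul_zero]
  · rw [hfs']
    simp only [NKg, mul_zero, inner_zero_right, inner_zero_left, inner_mkq]
    nlinarith
  · rw [hft']
    simp only [NKg, mul_zero, inner_zero_right, inner_zero_left, inner_mkq]
    nlinarith
  · rw [hfs', hft']
    simp only [NKg, hC, hD, mul_zero, inner_zero_right, inner_zero_left, inner_mkq]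
    nlinarith
end
end

section
/- For the immersion f: S² → S³×S³, f(x) = ½(1 − √3 x, 1 + √3 x) with x an imaginary unit quaternion, and for any tangent vector w to S² at x (i.e., imaginary quaternion w with ⟨w,x⟩ = 0), the differential df(w) = (√3/2)(−w, w) is tangent to S³×S³ at f(x), the tangent plane df(T_xS²) is invariant under J (namely J df(w) = df(xw)), and P maps df(T_xS²) into its g-orthogonal complement: g(P df(w), df(w')) = 0 for all tangent w, w'. -/
noncomputable section

/-- Differential of `f(x) = ½(1 − √3 x, 1 + √3 x)` applied to a tangent vector `w` of `S²`:
`df(w) = (√3/2)(−w, w)`. -/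
def NKdf (w : Quaternion ℝ) : Quaternion ℝ × Quaternion ℝ :=
  ((Real.sqrt 3 / 2) • (-w), (Real.sqrt 3 / 2) • w)

lemma NKre_comm (a b : Quaternion ℝ) : (a * b).re = (b * a).re := by
  simp [Quaternion.re_mul]; ring

set_option maxHeartbeats 2000000 in
/-- for `f : S² → S³×S³`, `f(x) = ½(1 − √3 x, 1 + √3 x)` (with `x` an
imaginary unit quaternion) and any tangent vectors `w, w'` of `S²` at `x`, the vector
`df(w) = (√3/2)(−w, w)` is tangent to `S³×S³` at `f(x)`, the tangent plane is
`J`-invariant — indeed `J df(w) = df(xw)` — and `P` maps the tangent plane into its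
`g`-orthogonal complement: `g(P df(w), df(w')) = 0`. -/
theorem NK_example_sphere (x w w' : Quaternion ℝ)
    (hx : x.re = 0) (hxn : ‖x‖ = 1)
    (hw : w.re = 0) (hwx : (inner ℝ w x : ℝ) = 0)
    (hw' : w'.re = 0) (hw'x : (inner ℝ w' x : ℝ) = 0)
    (p q : Quaternion ℝ)
    (hp : p = (2 : ℝ)⁻¹ • ((1 : Quaternion ℝ) - Real.sqrt 3 • x))
    (hq : q = (2 : ℝ)⁻¹ • ((1 : Quaternion ℝ) + Real.sqrt 3 • x)) :
    (inner ℝ (NKdf w).1 p : ℝ) = 0 ∧ (inner ℝ (NKdf w).2 q : ℝ) = 0 ∧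
    NKJ p q (NKdf w) = NKdf (x * w) ∧
    NKg p q (NKP p q (NKdf w)) (NKdf w') = 0 := by
  have h3 : Real.sqrt 3 * Real.sqrt 3 = 3 := Real.mul_self_sqrt (by norm_num)
  have h3ne : Real.sqrt 3 ≠ 0 := by positivity
  have hsx : star x = -x := by ext <;> simp [hx]
  have hxx : x * x = -1 := by
    have h2 := Quaternion.self_mul_star x
    rw [hsx, Quaternion.normSq_eq_norm_mul_self, hxn] at h2
    simp only [mul_neg] at h2; norm_num at h2
    exact neg_eq_iff_eq_neg.mp h2
  have hpq : p * q = 1 := by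
    rw [hp, hq]
    simp only [smul_mul_assoc, mul_smul_comm, mul_add, add_mul, sub_mul, mul_sub, hxx, smul_smul,
      one_mul, mul_one]
    match_scalars <;> nlinarith [h3]
  have hqp : q * p = 1 := by
    rw [hp, hq]
    simp only [smul_mul_assoc, mul_smul_comm, mul_add, add_mul, sub_mul, mul_sub, hxx, smul_smul,
      one_mul, mul_one]
    match_scalars <;> nlinarith [h3]
  have hpp : p * p = -q := by
    rw [hp, hq]
    simp only [smul_mul_assoc, mul_smul_comm, mul_add, add_mul, sub_mul, mul_sub, hxx, smul_smul,
      one_mul, mul_one]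
    match_scalars <;> nlinarith [h3]
  have hqq : q * q = -p := by
    rw [hp, hq]
    simp only [smul_mul_assoc, mul_smul_comm, mul_add, add_mul, sub_mul, mul_sub, hxx, smul_smul,
      one_mul, mul_one]
    match_scalars <;> nlinarith [h3]
  have hqinv : q⁻¹ = p := inv_eq_of_mul_eq_one_left hpq
  have hpinv : p⁻¹ = q := inv_eq_of_mul_eq_one_left hqp
  have hsp : star p = q := by
    rw [hp, hq]
    simp only [star_sub, star_one, Quaternion.star_smul, hsx, star_trivial]
    module
  have hsq : star q = p := by
    rw [hp, hq]
    simp only [star_add, star_one, Quaternion.star_smul, hsx, star_trivial]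
    module
  have hsum : q * w + p * w = w := by
    rw [← add_mul, hq, hp]
    simp only [smul_mul_assoc, add_mul, sub_mul, one_mul, smul_smul]
    match_scalars <;> ring
  have hwxre : (w * x).re = 0 := by
    rw [Quaternion.inner_def, hsx, mul_neg, Quaternion.re_neg, neg_eq_zero] at hwx; exact hwx
  have part1 : (inner ℝ (NKdf w).1 p : ℝ) = 0 := by
    show (inner ℝ ((Real.sqrt 3 / 2) • (-w)) p : ℝ) = 0
    rw [Quaternion.inner_def, hsp, hq]
    simp [mul_add, mul_smul_comm, smul_smul, Quaternion.re_smul, hw, hwxre]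
  have part2 : (inner ℝ (NKdf w).2 q : ℝ) = 0 := by
    show (inner ℝ ((Real.sqrt 3 / 2) • w) q : ℝ) = 0
    rw [Quaternion.inner_def, hsq, hp]
    simp [mul_sub, mul_smul_comm, smul_smul, Quaternion.re_smul, hw, hwxre]
  have part3 : NKJ p q (NKdf w) = NKdf (x * w) := by
    simp only [NKJ, NKdf, hqinv, hpinv, mul_smul_comm, hpp, hqq, neg_mul, smul_neg, mul_neg,
      neg_neg, Prod.mk.injEq]
    constructor
    · rw [hq]
      simp only [smul_mul_assoc, add_mul, one_mul, smul_smul, smul_add, smul_sub, smul_neg]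
      match_scalars <;> field_simp <;> nlinarith [h3]
    · rw [hp]
      simp only [smul_mul_assoc, sub_mul, one_mul, smul_smul, smul_add, smul_sub, smul_neg]
      match_scalars <;> field_simp <;> nlinarith [h3]
  have key1 : (inner ℝ (q * w) w' : ℝ) + (inner ℝ (p * w) w' : ℝ) = (inner ℝ w w' : ℝ) := by
    rw [← inner_add_left, hsum]
  have key2 : (inner ℝ (p * w) (p * w') : ℝ) = (inner ℝ w w' : ℝ) := by
    rw [Quaternion.inner_def, Quaternion.inner_def, star_mul, hsp, mul_assoc, NKre_comm,
      mul_assoc, mul_assoc, hqp, mul_one]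
  have key3 : (inner ℝ (q * w') (q * w) : ℝ) = (inner ℝ w w' : ℝ) := by
    rw [real_inner_comm, Quaternion.inner_def, Quaternion.inner_def, star_mul, hsq, mul_assoc,
      NKre_comm, mul_assoc, mul_assoc, hpq, mul_one]
  have part4 : NKg p q (NKP p q (NKdf w)) (NKdf w') = 0 := by
    simp only [NKg, NKP, NKdf, hqinv, hpinv, mul_smul_comm, hpp, hqq, neg_mul, smul_neg, mul_neg,
      neg_neg, ← mul_assoc, real_inner_smul_left, real_inner_smul_right, inner_neg_left,
      inner_neg_right]
    have hs : Real.sqrt 3 / 2 * (Real.sqrt 3 / 2) = 3 / 4 := by linear_combination h3 / 4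
    rw [hs]
    linarith [key1, key2, key3]
  exact ⟨part1, part2, part3, part4⟩
end
end
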